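/- Let q = 2, t ≥ 1 and n ≥ 2 integers, and M = (𝔽_2^{n×n})^t. If 4 does not divide t − 2 and 4 does not divide t − 1 (as integers), then there exists no perfect linear sum-rank code in M with minimum distance d ∈ {5, 6}. -/

import Mathlib

open Matrix

/-- The sum-rank weight of a tuple of matrices. -/
noncomputable def sumRankW {F : Type} [Field F] {t n m : ℕ}
    (X : Fin t → Matrix (Fin n) (Fin m) F) : ℕ :=
  ∑ i, (X i).rank

/-- The number of tuples of matrices of sum-rank weight at most `r`
(the volume of a sum-rank ball of radius `r`). -/
noncomputable def ballVol (F : Type) [Field F] [Fintype F] (t n m r : ℕ) : ℕ :=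
  Nat.card {X : Fin t → Matrix (Fin n) (Fin m) F // sumRankW X ≤ r}

/-- `d` is the minimum sum-rank distance of the linear code `C`:
`d` is the least sum-rank weight of a nonzero codeword of `C`
(in particular `C` contains a nonzero element). -/
def IsMinDist {F : Type} [Field F] {t n : ℕ}
    (C : Submodule F (Fin t → Matrix (Fin n) (Fin n) F)) (d : ℕ) : Prop :=
  IsLeast {w | ∃ x ∈ C, x ≠ 0 ∧ sumRankW x = w} d

/-- The linear code `C` with minimum distance `d` is perfect:
`|C| · V_{⌊(d-1)/2⌋} = |M|`. -/
def IsPerfect (F : Type) [Field F] [Fintype F] {t n : ℕ}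
    (C : Submodule F (Fin t → Matrix (Fin n) (Fin n) F)) (d : ℕ) : Prop :=
  Nat.card C * ballVol F t n n ((d - 1) / 2) =
    Nat.card (Fin t → Matrix (Fin n) (Fin n) F)

namespace SRAux
abbrev Fq : Type := ZMod 2
abbrev Mat (m : ℕ) := Matrix (Fin (m+2)) (Fin (m+2)) Fq
variable {m : ℕ}
def SU (N : Mat m) : Prop := ∀ i j : Fin (m+2), j ≤ i → N i j = 0




lemma fq_cases (a : Fq) : a = 0 ∨ a = 1 := by revert a; decide

lemma fq_add_self (a : Fq) : a + a = 0 := by revert a; decide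


/-- strictly upper triangular -/

lemma SU.zero : SU (0 : Mat m) := fun _ _ _ => rfl

lemma SU.add {A B : Mat m} (hA : SU A) (hB : SU B) : SU (A + B) := by
  intro i j h
  simp [Matrix.add_apply, hA i j h, hB i j h]

lemma SU.mul {A B : Mat m} (hA : SU A) (hB : SU B) : SU (A * B) := by
  intro i j h
  rw [Matrix.mul_apply]
  refine Finset.sum_eq_zero fun k _ => ?_
  rcases le_or_gt k i with hk | hk
  · rw [hA i k hk, zero_mul]
  · rw [hB k j (le_of_lt (lt_of_le_of_lt h hk)), mul_zero]

lemma SU.pow_apply {N : Mat m} (hN : SU N) :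
    ∀ (s : ℕ) (i j : Fin (m+2)), (j : ℕ) < (i : ℕ) + s → (N ^ s) i j = 0 := by
  intro s
  induction s with
  | zero =>
    intro i j hij
    rw [pow_zero]
    exact Matrix.one_apply_ne (by rintro rfl; omega)
  | succ s ih =>
    intro i j hij
    rw [pow_succ, Matrix.mul_apply]
    refine Finset.sum_eq_zero fun k _ => ?_
    rcases lt_or_ge (k : ℕ) ((i : ℕ) + s) with hk | hk
    · rw [ih i k hk, zero_mul]
    · rw [hN k j (by rw [Fin.le_def]; omega), mul_zero]

lemma SU.pow_eq_zero {N : Mat m} (hN : SU N) {s : ℕ} (hs : m + 2 ≤ s) : N ^ s = 0 := by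
  ext i j
  rw [hN.pow_apply s i j (by omega)]
  rfl

lemma mat_add_self (A : Mat m) : A + A = 0 := by
  ext i j
  exact fq_add_self _

lemma one_add_sq (N : Mat m) : (1 + N) * (1 + N) = 1 + N * N := by
  have h : (1 + N) * (1 + N) = 1 + ((N + N) + N * N) := by noncomm_ring
  rw [h, mat_add_self, zero_add]

lemma one_add_pow_two_pow (N : Mat m) (k : ℕ) :
    (1 + N) ^ (2 ^ k) = 1 + N ^ (2 ^ k) := by
  induction k with
  | zero => simp
  | succ k ih =>
    have h2 : 2 ^ (k+1) = 2 ^ k * 2 := by ring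
    rw [h2, pow_mul, pow_mul, ih, pow_two, one_add_sq, ← pow_two]


/-- elementary matrix with a single 1 at (a,b) -/
def sbm (a b : Fin (m+2)) : Mat m := Matrix.of fun i j => if i = a ∧ j = b then (1 : Fq) else 0

lemma sbm_apply (a b i j : Fin (m+2)) :
    sbm a b i j = if i = a ∧ j = b then (1 : Fq) else 0 := rfl

lemma SU.sbm {a b : Fin (m+2)} (hab : a < b) : SU (sbm a b) := by
  intro i j hij
  rw [sbm_apply, if_neg]
  rintro ⟨rfl, rfl⟩
  exact absurd hab (not_lt.mpr hij)

lemma sbm_mul_apply (a b : Fin (m+2)) (A : Mat m) (i j : Fin (m+2)) :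
    (sbm a b * A) i j = if i = a then A b j else 0 := by
  rw [Matrix.mul_apply]
  by_cases hia : i = a
  · subst hia
    rw [if_pos rfl]
    rw [Finset.sum_eq_single b]
    · simp [sbm_apply]
    · intro k _ hk
      simp [sbm_apply, hk]
    · intro h; exact absurd (Finset.mem_univ b) h
  · rw [if_neg hia]
    refine Finset.sum_eq_zero fun k _ => ?_
    simp [sbm_apply, hia]

lemma mul_sbm_apply (a b : Fin (m+2)) (A : Mat m) (i j : Fin (m+2)) :
    (A * sbm a b) i j = if j = b then A i a else 0 := by
  rw [Matrix.mul_apply]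
  by_cases hjb : j = b
  · subst hjb
    rw [if_pos rfl]
    rw [Finset.sum_eq_single a]
    · simp [sbm_apply]
    · intro k _ hk
      simp [sbm_apply, hk]
    · intro h; exact absurd (Finset.mem_univ a) h
  · rw [if_neg hjb]
    refine Finset.sum_eq_zero fun k _ => ?_
    simp [sbm_apply, hjb]

lemma sbm_mul_self {a b : Fin (m+2)} (hab : a ≠ b) : sbm a b * sbm a b = 0 := by
  ext i j
  rw [sbm_mul_apply]
  by_cases hia : i = a
  · simp [hia, sbm_apply, hab.symm]
  · simp [hia]


def GSet : Set (Mat m)ˣ := {u | ∃ N, SU N ∧ (u : Mat m) = 1 + N}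

lemma GSet.one_mem : (1 : (Mat m)ˣ) ∈ GSet := ⟨0, SU.zero, by simp⟩

lemma GSet.mul_mem {u v : (Mat m)ˣ} (hu : u ∈ GSet) (hv : v ∈ GSet) : u * v ∈ GSet := by
  obtain ⟨N, hN, hNe⟩ := hu
  obtain ⟨N', hN', hNe'⟩ := hv
  refine ⟨N + N' + N * N', (hN.add hN').add (hN.mul hN'), ?_⟩
  rw [Units.val_mul, hNe, hNe']
  noncomm_ring

lemma GSet.pow_mem {u : (Mat m)ˣ} (hu : u ∈ GSet) (s : ℕ) : u ^ s ∈ GSet := by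
  induction s with
  | zero => simpa using GSet.one_mem
  | succ s ih => rw [pow_succ]; exact GSet.mul_mem ih hu

lemma GSet.pow_two_pow_eq_one {u : (Mat m)ˣ} (hu : u ∈ GSet) : u ^ (2 ^ (m + 2)) = 1 := by
  obtain ⟨N, hN, hNe⟩ := hu
  apply Units.ext
  rw [Units.val_pow_eq_pow_val, hNe, one_add_pow_two_pow,
    hN.pow_eq_zero (le_of_lt Nat.lt_two_pow_self), add_zero, Units.val_one]

lemma GSet.inv_mem {u : (Mat m)ˣ} (hu : u ∈ GSet) : u⁻¹ ∈ GSet := by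
  have h1 : u * u ^ (2 ^ (m + 2) - 1) = 1 := by
    rw [← pow_succ']
    have : 2 ^ (m + 2) - 1 + 1 = 2 ^ (m + 2) := by
      have := Nat.one_le_two_pow (n := m + 2); omega
    rw [this]
    exact GSet.pow_two_pow_eq_one hu
  rw [inv_eq_of_mul_eq_one_right h1]
  exact GSet.pow_mem hu _

def G (m : ℕ) : Subgroup (Mat m)ˣ where
  carrier := GSet
  one_mem' := GSet.one_mem
  mul_mem' := GSet.mul_mem
  inv_mem' := GSet.inv_mem

lemma isPGroup_G : IsPGroup 2 (G m) := by
  intro g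
  refine ⟨m + 2, ?_⟩
  apply Subtype.ext
  rw [SubmonoidClass.coe_pow]
  simpa using GSet.pow_two_pow_eq_one g.2

def Emat (m : ℕ) : Mat m := sbm 0 (Fin.last (m+1))

lemma zero_ne_last : (0 : Fin (m+2)) ≠ Fin.last (m+1) := by
  rw [Fin.ne_iff_vne]
  simp [Fin.last]

lemma Emat_mul_su {N : Mat m} (hN : SU N) : Emat m * N = 0 := by
  ext i j
  rw [Emat, sbm_mul_apply]
  by_cases hi : i = 0 <;> simp [hi, hN (Fin.last (m+1)) j (Fin.le_last j)]

lemma su_mul_Emat {N : Mat m} (hN : SU N) : N * Emat m = 0 := by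
  ext i j
  rw [Emat, mul_sbm_apply]
  by_cases hj : j = Fin.last (m+1) <;> simp [hj, hN i 0 (Fin.zero_le i)]

lemma one_add_Emat_mul : (1 + Emat m) * (1 + Emat m) = 1 := by
  rw [one_add_sq, Emat, sbm_mul_self zero_ne_last, add_zero]

lemma rank_Emat : (Emat m).rank = 1 := by
  have hle : (Emat m).rank ≤ 1 := by
    have hfact : Emat m =
        (Matrix.of fun (i : Fin (m+2)) (_ : Fin 1) => if i = 0 then (1 : Fq) else 0) *
        (Matrix.of fun (_ : Fin 1) (j : Fin (m+2)) => if j = Fin.last (m+1) then (1 : Fq) else 0) := by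
      ext i j
      rw [Matrix.mul_apply, Fin.sum_univ_one]
      by_cases hi : i = 0 <;> by_cases hj : j = Fin.last (m+1) <;>
        simp [Emat, sbm_apply, hi, hj]
    rw [hfact]
    refine le_trans (Matrix.rank_mul_le_left _ _) ?_
    simpa using Matrix.rank_le_card_width
      (Matrix.of fun (i : Fin (m+2)) (_ : Fin 1) => if i = 0 then (1 : Fq) else 0)
  have hpos : 0 < (Emat m).rank := by
    rw [Matrix.rank]
    rw [Module.finrank_pos_iff]
    refine ⟨⟨(Emat m).mulVecLin (Pi.single (Fin.last (m+1)) 1), LinearMap.mem_range_self _ _⟩,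
      0, ?_⟩
    intro hcontr
    have h0 : (Emat m).mulVecLin (Pi.single (Fin.last (m+1)) 1) 0 = 0 := by
      rw [Subtype.ext_iff] at hcontr
      simp only [ZeroMemClass.coe_zero] at hcontr
      rw [hcontr]; rfl
    rw [Matrix.mulVecLin_apply, Matrix.mulVec_single] at h0
    simp [Emat, sbm_apply] at h0
  omega

lemma rank_comb (a b : Fq) :
    (a • 1 + b • Emat m).rank = if a = 1 then m + 2 else if b = 1 then 1 else 0 := by
  rcases fq_cases a with rfl | rfl <;> rcases fq_cases b with rfl | rfl
  · simpa using Matrix.rank_zero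
  · simpa using rank_Emat
  · simp only [one_smul, smul_zero, zero_smul, add_zero, if_true]
    simpa using Matrix.rank_one (n := Fin (m+2)) (R := Fq)
  · simp only [one_smul, if_true]
    rw [Matrix.rank_of_isUnit _ ⟨⟨1 + Emat m, 1 + Emat m, one_add_Emat_mul, one_add_Emat_mul⟩, rfl⟩]
    simp

abbrev Ssp (t m : ℕ) := {X : Fin t → Mat m // sumRankW X ≤ 2}

lemma rank_conj (u : (Mat m)ˣ) (A : Mat m) :
    ((u : Mat m) * A * ((u⁻¹ : (Mat m)ˣ) : Mat m)).rank = A.rank := by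
  rw [Matrix.rank_mul_eq_left_of_isUnit_det _ _
    ((Matrix.isUnit_iff_isUnit_det _).mp (u⁻¹).isUnit),
    Matrix.rank_mul_eq_right_of_isUnit_det _ _
    ((Matrix.isUnit_iff_isUnit_det _).mp u.isUnit)]

def conjSmul {t m : ℕ} (g : G m) (X : Ssp t m) : Ssp t m :=
  ⟨fun i => ((g : (Mat m)ˣ) : Mat m) * X.1 i * (((g : (Mat m)ˣ)⁻¹ : (Mat m)ˣ) : Mat m), by
    have : sumRankW (fun i => ((g : (Mat m)ˣ) : Mat m) * X.1 i *
        (((g : (Mat m)ˣ)⁻¹ : (Mat m)ˣ) : Mat m)) = sumRankW X.1 := by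
      unfold sumRankW
      exact Finset.sum_congr rfl fun i _ => rank_conj _ _
    rw [this]
    exact X.2⟩

lemma conjSmul_one {t m : ℕ} (X : Ssp t m) : conjSmul 1 X = X :=
  Subtype.ext (funext fun i => by simp [conjSmul])

lemma conjSmul_mul {t m : ℕ} (g h : G m) (X : Ssp t m) :
    conjSmul (g * h) X = conjSmul g (conjSmul h X) :=
  Subtype.ext (funext fun i => by
    simp only [conjSmul, Subgroup.coe_mul, _root_.mul_inv_rev, Units.val_mul, mul_assoc])

instance conjAction (t m : ℕ) : MulAction (G m) (Ssp t m) where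
  smul := conjSmul
  one_smul := conjSmul_one
  mul_smul := conjSmul_mul

lemma smul_apply {t m : ℕ} (g : G m) (X : Ssp t m) (i : Fin t) :
    (g • X).1 i = ((g : (Mat m)ˣ) : Mat m) * X.1 i * (((g : (Mat m)ˣ)⁻¹ : (Mat m)ˣ) : Mat m) :=
  rfl

/-- the matrices commuting with the unitriangular group -/
def goodMat (A : Mat m) : Prop := ∃ a b : Fq, A = a • 1 + b • Emat m

lemma goodMat_of_comm {A : Mat m}
    (h : ∀ a b : Fin (m+2), a < b → sbm a b * A = A * sbm a b) : goodMat A := by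
  have hcol : ∀ a b : Fin (m+2), a < b → ∀ k, k ≠ a → A k a = 0 := by
    intro a b hab k hk
    have e := congrFun (congrFun (h a b hab) k) b
    rw [sbm_mul_apply, mul_sbm_apply, if_pos rfl, if_neg hk] at e
    exact e.symm
  have hrow : ∀ a b : Fin (m+2), a < b → ∀ l, l ≠ b → A b l = 0 := by
    intro a b hab l hl
    have e := congrFun (congrFun (h a b hab) a) l
    rw [sbm_mul_apply, mul_sbm_apply, if_pos rfl, if_neg hl] at e
    exact e
  have hdiag : ∀ a b : Fin (m+2), a < b → A a a = A b b := by
    intro a b hab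
    have e := congrFun (congrFun (h a b hab) a) b
    rw [sbm_mul_apply, mul_sbm_apply, if_pos rfl, if_pos rfl] at e
    exact e.symm
  refine ⟨A 0 0, A 0 (Fin.last (m+1)), ?_⟩
  ext k l
  rw [Matrix.add_apply, Matrix.smul_apply, Matrix.smul_apply, smul_eq_mul, smul_eq_mul,
    Emat, sbm_apply]
  by_cases hkl : k = l
  · subst hkl
    by_cases hk0 : k = 0
    · subst hk0
      rw [Matrix.one_apply_eq, mul_one, if_neg (fun hc => zero_ne_last hc.2), mul_zero, add_zero]
    · rw [Matrix.one_apply_eq, mul_one, if_neg (fun hc => hk0 hc.1), mul_zero, add_zero]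
      exact (hdiag 0 k (Fin.pos_of_ne_zero hk0)).symm
  · rw [Matrix.one_apply_ne (Ne.symm (fun h' => hkl h'.symm)), mul_zero, zero_add]
    by_cases hgood : k = 0 ∧ l = Fin.last (m+1)
    · rw [if_pos hgood, mul_one, hgood.1, hgood.2]
    · rw [if_neg hgood, mul_zero]
      by_cases hl : l = Fin.last (m+1)
      · have hk0 : k ≠ 0 := fun hc => hgood ⟨hc, hl⟩
        exact hrow 0 k (Fin.pos_of_ne_zero hk0) l (fun hc => hkl hc.symm)
      · have hllt : l < Fin.last (m+1) := by
          have h1 : (l : ℕ) ≠ m + 1 := fun hc => hl (Fin.ext (by simpa [Fin.last] using hc))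
          have h2 : (l : ℕ) ≤ m + 1 := Fin.is_le l
          rw [Fin.lt_def]
          simp only [Fin.val_last]
          omega
        exact hcol l (Fin.last (m+1)) hllt k hkl

lemma comm_of_good {A : Mat m} (hA : goodMat A) {N : Mat m} (hN : SU N) :
    A * (1 + N) = (1 + N) * A := by
  obtain ⟨a, b, rfl⟩ := hA
  have h1 : (a • 1 + b • Emat m) * N = a • N := by
    rw [add_mul, smul_mul_assoc, one_mul, smul_mul_assoc, Emat_mul_su hN, smul_zero, add_zero]
  have h2 : N * (a • 1 + b • Emat m) = a • N := by
    rw [mul_add, mul_smul_comm, mul_one, mul_smul_comm, su_mul_Emat hN, smul_zero, add_zero]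
  rw [mul_add, mul_one, h1, add_mul, one_mul, h2]

lemma mem_fixedPoints_iff {t m : ℕ} (X : Ssp t m) :
    X ∈ MulAction.fixedPoints (G m) (Ssp t m) ↔ ∀ i, goodMat (X.1 i) := by
  constructor
  · intro h i
    apply goodMat_of_comm
    intro a b hab
    have hmul1 : (1 + sbm a b) * (1 + sbm a b) = 1 := by
      rw [one_add_sq, sbm_mul_self (ne_of_lt hab), add_zero]
    set u : (Mat m)ˣ := ⟨1 + sbm a b, 1 + sbm a b, hmul1, hmul1⟩ with hu
    have hmem : u ∈ G m := ⟨sbm a b, SU.sbm hab, rfl⟩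
    have hfix := h ⟨u, hmem⟩
    have hcomp := congrFun (congrArg Subtype.val hfix) i
    rw [smul_apply] at hcomp
    have huval : ((⟨u, hmem⟩ : G m) : (Mat m)ˣ) = u := rfl
    rw [huval] at hcomp
    have huinv : ((u⁻¹ : (Mat m)ˣ) : Mat m) = 1 + sbm a b := rfl
    have huv : ((u : (Mat m)ˣ) : Mat m) = 1 + sbm a b := rfl
    rw [huinv, huv] at hcomp
    -- hcomp : (1 + s) * A * (1 + s) = A
    set A := X.1 i
    have h2 : (1 + sbm a b) * A = A * (1 + sbm a b) := by
      have h3 := congrArg (fun M => M * (1 + sbm a b)) hcomp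
      rw [mul_assoc ((1 + sbm a b) * A), hmul1, mul_one] at h3
      exact h3
    have h4 := h2
    rw [add_mul, mul_add, one_mul, mul_one] at h4
    exact add_left_cancel h4
  · intro h g
    obtain ⟨N, hN, hval⟩ := g.2
    apply Subtype.ext
    funext i
    rw [smul_apply]
    have hcomm : X.1 i * ((g : (Mat m)ˣ) : Mat m) = ((g : (Mat m)ˣ) : Mat m) * X.1 i := by
      rw [hval]
      exact comm_of_good (h i) hN
    rw [← hcomm, mul_assoc]
    rw [← Units.val_mul, mul_inv_cancel, Units.val_one, mul_one]

def r2 (m : ℕ) (p : Fq × Fq) : ℕ := if p.1 = 1 then m + 2 else if p.2 = 1 then 1 else 0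

def recon (t m : ℕ) (p : Fin t → Fq × Fq) : Fin t → Mat m :=
  fun i => (p i).1 • 1 + (p i).2 • Emat m

lemma sumRankW_recon (t m : ℕ) (p : Fin t → Fq × Fq) :
    sumRankW (recon t m p) = ∑ i, r2 m (p i) := by
  unfold sumRankW recon r2
  exact Finset.sum_congr rfl fun i _ => rank_comb _ _

lemma comb_00 (a b : Fq) : (a • 1 + b • Emat m) 0 0 = a := by
  rw [Matrix.add_apply, Matrix.smul_apply, Matrix.smul_apply, Matrix.one_apply_eq,
    smul_eq_mul, mul_one, Emat, sbm_apply, if_neg (fun hc => zero_ne_last hc.2),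
    smul_eq_mul, mul_zero, add_zero]

lemma comb_0last (a b : Fq) : (a • 1 + b • Emat m) 0 (Fin.last (m+1)) = b := by
  rw [Matrix.add_apply, Matrix.smul_apply, Matrix.smul_apply,
    Matrix.one_apply_ne zero_ne_last, smul_eq_mul, mul_zero, zero_add, Emat, sbm_apply,
    if_pos ⟨rfl, rfl⟩, smul_eq_mul, mul_one]

noncomputable def fixEquiv (t m : ℕ) :
    (MulAction.fixedPoints (G m) (Ssp t m)) ≃
      {p : Fin t → Fq × Fq // ∑ i, r2 m (p i) ≤ 2} where
  toFun X := ⟨fun i => (X.1.1 i 0 0, X.1.1 i 0 (Fin.last (m+1))), by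
    have hg := (mem_fixedPoints_iff X.1).mp X.2
    have hrec : recon t m (fun i => (X.1.1 i 0 0, X.1.1 i 0 (Fin.last (m+1)))) = X.1.1 := by
      funext i
      show (X.1.1 i 0 0) • 1 + (X.1.1 i 0 (Fin.last (m+1))) • Emat m = X.1.1 i
      obtain ⟨a, b, hab⟩ := hg i
      rw [hab, comb_00, comb_0last]
    have h2 := sumRankW_recon t m (fun i => (X.1.1 i 0 0, X.1.1 i 0 (Fin.last (m+1))))
    rw [hrec] at h2
    rw [← h2]
    exact X.1.2⟩
  invFun p := ⟨⟨recon t m p.1, by rw [sumRankW_recon]; exact p.2⟩,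
    (mem_fixedPoints_iff _).mpr (fun i => ⟨(p.1 i).1, (p.1 i).2, rfl⟩)⟩
  left_inv X := by
    apply Subtype.ext
    apply Subtype.ext
    have hg := (mem_fixedPoints_iff X.1).mp X.2
    funext i
    show (X.1.1 i 0 0) • 1 + (X.1.1 i 0 (Fin.last (m+1))) • Emat m = X.1.1 i
    obtain ⟨a, b, hab⟩ := hg i
    rw [hab, comb_00, comb_0last]
  right_inv p := by
    apply Subtype.ext
    funext i
    show ((recon t m p.1 i) 0 0, (recon t m p.1 i) 0 (Fin.last (m+1))) = p.1 i
    show (((p.1 i).1 • 1 + (p.1 i).2 • Emat m) 0 0,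
      ((p.1 i).1 • 1 + (p.1 i).2 • Emat m) 0 (Fin.last (m+1))) = p.1 i
    rw [comb_00, comb_0last]

lemma even_card_of_fpf_inv {α : Type} (s : Finset α) (g : α → α)
    (hmem : ∀ a ∈ s, g a ∈ s) (hinv : ∀ a ∈ s, g (g a) = a) (hfpf : ∀ a ∈ s, g a ≠ a) :
    2 ∣ s.card := by
  have h := Finset.sum_involution (s := s) (f := fun _ => (1 : ZMod 2))
    (fun a _ => g a) (fun a ha => fq_add_self 1) (fun a ha _ => hfpf a ha) hmem
    (fun a ha => hinv a ha)
  have h2 : ((s.card : ℕ) : ZMod 2) = 0 := by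
    rw [← h, Finset.sum_const, nsmul_eq_mul, mul_one]
  exact (ZMod.natCast_eq_zero_iff _ _).mp h2

open Finset in
lemma key_sum_eq (t m : ℕ) (p : Fin t → Fq × Fq) (hQ : ∀ i, (p i).1 = 0) :
    ∑ i, r2 m (p i) = (univ.filter (fun k => (p k).2 = 1)).card := by
  rw [Finset.card_filter]
  refine Finset.sum_congr rfl fun k _ => ?_
  unfold r2
  rw [if_neg (by rw [hQ k]; decide)]

open Finset in
lemma card_subsets_le_two (t : ℕ) :
    ((univ : Finset (Finset (Fin t))).filter (fun s => s.card ≤ 2)).card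
      = 1 + t + Nat.choose t 2 := by
  have hsplit : (univ : Finset (Finset (Fin t))).filter (fun s => s.card ≤ 2)
      = (Finset.range 3).biUnion (fun k => univ.filter (fun s => s.card = k)) := by
    ext s
    simp only [mem_filter, mem_univ, true_and, mem_biUnion, mem_range]
    constructor
    · intro h; exact ⟨s.card, by omega, rfl⟩
    · rintro ⟨k, hk, rfl⟩; omega
  rw [hsplit, Finset.card_biUnion]
  · have hcard : ∀ k, ((univ : Finset (Finset (Fin t))).filter (fun s => s.card = k)).card
        = Nat.choose t k := by
      intro k
      have : (univ : Finset (Finset (Fin t))).filter (fun s => s.card = k)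
          = Finset.powersetCard k univ := by
        ext s
        simp [Finset.mem_powersetCard, Finset.subset_univ]
      rw [this, Finset.card_powersetCard, Finset.card_univ, Fintype.card_fin]
    rw [Finset.sum_range_succ, Finset.sum_range_succ, Finset.sum_range_one, hcard, hcard, hcard,
      Nat.choose_zero_right, Nat.choose_one_right]
  · intro a _ b _ hab
    simp only [Finset.disjoint_left, mem_filter]
    rintro s ⟨_, h1⟩ ⟨_, h2⟩
    exact hab (h1 ▸ h2 ▸ rfl)

open Finset in
lemma card_T_parity (t m : ℕ) :
    ((univ : Finset (Fin t → Fq × Fq)).filter (fun p => ∑ i, r2 m (p i) ≤ 2)).card % 2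
      = (1 + t + Nat.choose t 2) % 2 := by
  classical
  set P : (Fin t → Fq × Fq) → Prop := fun p => ∑ i, r2 m (p i) ≤ 2 with hP
  set Q : (Fin t → Fq × Fq) → Prop := fun p => ∀ i, (p i).1 = 0 with hQd
  have hsplit := Finset.card_filter_add_card_filter_not
    (s := (univ : Finset (Fin t → Fq × Fq)).filter P) (p := Q)
  -- the involution flipping the second component by the first
  have heven : 2 ∣ (((univ : Finset (Fin t → Fq × Fq)).filter P).filter
      (fun p => ¬ Q p)).card := by
    apply even_card_of_fpf_inv _ (fun p => fun k => ((p k).1, (p k).2 + (p k).1))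
    · intro p hp
      simp only [mem_filter, mem_univ, true_and] at hp ⊢
      have hsum : ∑ i, r2 m (((p i).1, (p i).2 + (p i).1)) = ∑ i, r2 m (p i) := by
        refine Finset.sum_congr rfl fun k _ => ?_
        rcases fq_cases (p k).1 with h0 | h1
        · simp [r2, h0]
        · simp [r2, h1]
      constructor
      · show ∑ i, r2 m (((p i).1, (p i).2 + (p i).1)) ≤ 2
        rw [hsum]; exact hp.1
      · intro hc
        exact hp.2 (fun i => hc i)
    · intro p _
      funext k
      simp only
      rw [add_assoc, fq_add_self, add_zero]
    · intro p hp hc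
      rw [mem_filter] at hp
      apply hp.2
      intro i
      have := congrFun hc i
      rw [Prod.ext_iff] at this
      have h2 := this.2
      simp only at h2
      have h3 : (p i).2 + (p i).1 = (p i).2 + 0 := by rw [add_zero]; exact h2
      exact add_left_cancel h3
  have hA : (((univ : Finset (Fin t → Fq × Fq)).filter P).filter Q).card
      = ((univ : Finset (Finset (Fin t))).filter (fun s => s.card ≤ 2)).card := by
    refine Finset.card_bij' (fun p _ => univ.filter (fun k => (p k).2 = 1))
      (fun s _ => fun k => (0, if k ∈ s then 1 else 0)) ?_ ?_ ?_ ?_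
    · intro p hp
      rw [mem_filter, mem_filter] at hp
      rw [mem_filter]
      refine ⟨mem_univ _, ?_⟩
      rw [← key_sum_eq t m p hp.2]
      exact hp.1.2
    · intro s hs
      rw [mem_filter] at hs
      rw [mem_filter, mem_filter]
      have hQs : ∀ i, ((fun k => ((0 : Fq), if k ∈ s then (1 : Fq) else 0)) i).1 = 0 :=
        fun i => rfl
      refine ⟨⟨mem_univ _, ?_⟩, hQs⟩
      rw [hP]
      simp only
      rw [key_sum_eq t m _ hQs]
      have : (univ.filter fun k => (if k ∈ s then (1:Fq) else 0) = 1) = s := by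
        ext k
        rw [mem_filter]
        by_cases hk : k ∈ s <;> simp [hk]
      rw [this]
      exact hs.2
    · intro p hp
      rw [mem_filter] at hp
      funext k
      have hfst := hp.2 k
      apply Prod.ext
      · exact hfst.symm
      · simp only
        by_cases hk : (p k).2 = 1
        · rw [if_pos]
          · exact hk.symm
          · rw [mem_filter]; exact ⟨mem_univ _, hk⟩
        · rw [if_neg]
          · rcases fq_cases (p k).2 with h0 | h1
            · exact h0.symm
            · exact absurd h1 hk
          · rw [mem_filter]; rintro ⟨_, hc⟩; exact hk hc
    · intro s _
      ext k
      rw [mem_filter]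
      by_cases hk : k ∈ s <;> simp [hk]
  rw [← hsplit, hA, card_subsets_le_two]
  obtain ⟨w, hw⟩ := heven
  rw [hw]
  exact Nat.add_mul_mod_self_left _ 2 w

open Finset in
lemma card_Ssp_parity (t m : ℕ) :
    Nat.card (Ssp t m) % 2 = (1 + t + Nat.choose t 2) % 2 := by
  classical
  have hmod := (isPGroup_G (m := m)).card_modEq_card_fixedPoints (Ssp t m)
  have hfix : Nat.card (MulAction.fixedPoints (G m) (Ssp t m))
      = ((univ : Finset (Fin t → Fq × Fq)).filter (fun p => ∑ i, r2 m (p i) ≤ 2)).card := by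
    rw [Nat.card_congr (fixEquiv t m), Nat.card_eq_fintype_card, Fintype.card_subtype]
  have hT := card_T_parity t m
  rw [hfix] at hmod
  exact hmod.trans hT

lemma Emat_ne_zero : Emat m ≠ 0 := by
  intro hc
  have h := congrFun (congrFun hc 0) (Fin.last (m+1))
  rw [Emat, sbm_apply, if_pos ⟨rfl, rfl⟩] at h
  exact one_ne_zero h

lemma card_Ssp_ge_two (t m : ℕ) (ht : 1 ≤ t) : 1 < Nat.card (Ssp t m) := by
  have hi0 : (0 : ℕ) < t := ht
  set i0 : Fin t := ⟨0, hi0⟩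
  set Xone : Fin t → Mat m := fun i => if i = i0 then Emat m else 0 with hXone
  have hzero : sumRankW (0 : Fin t → Mat m) ≤ 2 := by
    unfold sumRankW
    simp [Matrix.rank_zero]
  have hone : sumRankW Xone = 1 := by
    unfold sumRankW
    have hr : ∀ i, (Xone i).rank = if i = i0 then 1 else 0 := by
      intro i
      by_cases h : i = i0 <;> simp [hXone, h, rank_Emat, Matrix.rank_zero]
    rw [Finset.sum_congr rfl (fun i _ => hr i), Finset.sum_ite_eq' Finset.univ i0 (fun _ => 1)]
    simp
  have hne : (0 : Fin t → Mat m) ≠ Xone := by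
    intro hc
    have := congrFun hc i0
    rw [hXone] at this
    simp only [if_pos rfl, Pi.zero_apply] at this
    exact Emat_ne_zero this.symm
  have : Nontrivial (Ssp t m) :=
    ⟨⟨⟨0, hzero⟩, ⟨Xone, by rw [hone]; omega⟩, fun hc => hne (congrArg Subtype.val hc)⟩⟩
  exact Finite.one_lt_card_iff_nontrivial.mpr this

lemma choose_two_parity (t : ℕ) (ht : 1 ≤ t) (h1 : t % 4 ≠ 1) (h2 : t % 4 ≠ 2) :
    (1 + t + Nat.choose t 2) % 2 = 1 := by
  have h04 : t % 4 = 0 ∨ t % 4 = 3 := by omega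
  rcases h04 with h0 | h3
  · obtain ⟨a, ha⟩ : ∃ a, t = 4 * a + 4 := ⟨t / 4 - 1, by omega⟩
    have hsub : t - 1 = 4 * a + 3 := by omega
    have e1 : t * (t - 1) = 2 * (2 * ((a + 1) * (4 * a + 3))) := by
      rw [hsub, ha]; ring
    have e2 : Nat.choose t 2 = 2 * ((a + 1) * (4 * a + 3)) := by
      rw [Nat.choose_two_right, e1, Nat.mul_div_cancel_left _ (by norm_num : 0 < 2)]
    rw [e2, ha]
    omega
  · obtain ⟨a, ha⟩ : ∃ a, t = 4 * a + 3 := ⟨t / 4, by omega⟩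
    have hsub : t - 1 = 4 * a + 2 := by omega
    have e1 : t * (t - 1) = 2 * (2 * (4 * a * a + 5 * a + 1) + 1) := by
      rw [hsub, ha]; ring
    have e2 : Nat.choose t 2 = 2 * (4 * a * a + 5 * a + 1) + 1 := by
      rw [Nat.choose_two_right, e1, Nat.mul_div_cancel_left _ (by norm_num : 0 < 2)]
    rw [e2, ha]
    omega

end SRAux

theorem stmt_10 (t n : ℕ) (ht : 1 ≤ t) (hn : 2 ≤ n)
    (ht2 : ¬ (4 : ℤ) ∣ ((t : ℤ) - 2)) (ht1 : ¬ (4 : ℤ) ∣ ((t : ℤ) - 1)) :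
    ¬ ∃ (C : Submodule (ZMod 2) (Fin t → Matrix (Fin n) (Fin n) (ZMod 2))) (d : ℕ),
        IsMinDist C d ∧ IsPerfect (ZMod 2) C d ∧ (d = 5 ∨ d = 6) := by
  obtain ⟨m, rfl⟩ : ∃ m, n = m + 2 := ⟨n - 2, by omega⟩
  rintro ⟨C, d, hmin, hperf, hd⟩
  have hrad : (d - 1) / 2 = 2 := by rcases hd with rfl | rfl <;> rfl
  rw [IsPerfect, hrad] at hperf
  have hVdef : ballVol (ZMod 2) t (m+2) (m+2) 2 = Nat.card (SRAux.Ssp t m) := rfl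
  set V := ballVol (ZMod 2) t (m+2) (m+2) 2 with hV
  -- the cardinality of the ambient space is a power of 2
  have hMeq : ∃ K, Nat.card (Fin t → Matrix (Fin (m+2)) (Fin (m+2)) (ZMod 2)) = 2 ^ K := by
    have h1 : Nat.card (Fin t → Matrix (Fin (m+2)) (Fin (m+2)) (ZMod 2))
        = Nat.card (Fin t → Fin (m+2) → Fin (m+2) → ZMod 2) := rfl
    rw [h1, Nat.card_fun, Nat.card_fun, Nat.card_fun, Nat.card_zmod]
    simp only [Nat.card_eq_fintype_card, Fintype.card_fin]
    exact ⟨(m+2) * ((m+2) * t), by rw [← pow_mul, ← pow_mul]⟩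
  obtain ⟨K, hK⟩ := hMeq
  have hdvd : V ∣ 2 ^ K := by
    refine Dvd.intro_left (Nat.card C) ?_
    rw [← hK]
    exact hperf
  have hVodd : V % 2 = 1 := by
    rw [hVdef, SRAux.card_Ssp_parity]
    have h1 : t % 4 ≠ 1 := by intro hc; apply ht1; omega
    have h2 : t % 4 ≠ 2 := by intro hc; apply ht2; omega
    exact SRAux.choose_two_parity t ht h1 h2
  have hcop : Nat.Coprime V 2 := Nat.coprime_two_right.mpr (Nat.odd_iff.mpr hVodd)
  have hV1 : V = 1 := (hcop.pow_right K).eq_one_of_dvd hdvd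
  have hVgt : 1 < V := by
    rw [hVdef]
    exact SRAux.card_Ssp_ge_two t m ht
  omega
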